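/- Let H be a real Hilbert space and let K_1, ..., K_N be closed subspaces with K_1 + ... + K_N = H, with P_i the orthogonal projection onto K_i. Suppose the quantity c_0 := sup over v with ||v|| = 1 of the infimum, over all decompositions v = Σ_{i=1}^N v_i with v_i ∈ K_i, of Σ_{i=1}^N || P_i Σ_{j=i+1}^N v_j ||², is finite. Then the operator norm of the error propagation operator satisfies || (I - P_N)(I - P_{N-1}) ··· (I - P_1) ||² = 1 - 1/(1 + c_0) (the Xu–Zikatanov identity). -/

import Mathlib

open RealInnerProductSpace


namespace XZaux

variable {H : Type*} [NormedAddCommGroup H] [InnerProductSpace ℝ H]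

/-- partial products of error propagation -/
noncomputable def E {N : ℕ} (P : Fin N → H →L[ℝ] H) : ℕ → H →L[ℝ] H
  | 0 => 1
  | k + 1 => if h : k < N then ((1 : H →L[ℝ] H) - P ⟨k, h⟩) * E P k else E P k

lemma E_take {N : ℕ} (P : Fin N → H →L[ℝ] H) :
    ∀ k, k ≤ N →
      ((List.ofFn fun i : Fin N => (1 : H →L[ℝ] H) - P i).take k).reverse.prod = E P k := by
  intro k
  induction k with
  | zero => intro _; simp [E]
  | succ k ih =>
    intro hk
    have hkN : k < N := hk
    rw [List.take_succ]
    have hlen : k < (List.ofFn fun i : Fin N => (1 : H →L[ℝ] H) - P i).length := by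
      simpa using hkN
    rw [List.getElem?_eq_getElem hlen]
    simp only [List.getElem_ofFn]
    rw [List.reverse_append]
    simp only [List.reverse_singleton, Option.toList_some, List.singleton_append,
      List.prod_cons]
    rw [ih hkN.le]
    simp [E, hkN]

lemma E_prod {N : ℕ} (P : Fin N → H →L[ℝ] H) :
    (List.ofFn fun i : Fin N => (1 : H →L[ℝ] H) - P i).reverse.prod = E P N := by
  have := E_take P N le_rfl
  rwa [List.take_of_length_le (by simp)] at this

lemma E_succ_apply {N : ℕ} (P : Fin N → H →L[ℝ] H) {k : ℕ} (hk : k < N) (v : H) :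
    E P (k + 1) v = E P k v - P ⟨k, hk⟩ (E P k v) := by
  simp [E, hk, ContinuousLinearMap.mul_apply, ContinuousLinearMap.sub_apply]

set_option linter.unusedSectionVars false

section Facts

variable {N : ℕ} {K : Fin N → Submodule ℝ H} {P : Fin N → H →L[ℝ] H}
  (hPmem : ∀ i x, P i x ∈ K i)
  (hPid : ∀ i, ∀ x ∈ K i, P i x = x)
  (hPsym : ∀ i x y, ⟪P i x, y⟫ = ⟪x, P i y⟫)

include hPmem hPid hPsym

lemma hPP : ∀ i x, P i (P i x) = P i x := fun i x => hPid i _ (hPmem i x)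

lemma inner_proj_self (i : Fin N) (u : H) : ⟪u, P i u⟫ = ‖P i u‖ ^ 2 :=
  calc ⟪u, P i u⟫ = ⟪u, P i (P i u)⟫ := by rw [hPP hPmem hPid hPsym]
    _ = ⟪P i u, P i u⟫ := (hPsym i u (P i u)).symm
    _ = ‖P i u‖ ^ 2 := real_inner_self_eq_norm_sq _

lemma norm_sub_proj (i : Fin N) (u : H) :
    ‖u - P i u‖ ^ 2 = ‖u‖ ^ 2 - ‖P i u‖ ^ 2 := by
  rw [norm_sub_sq_real, inner_proj_self hPmem hPid hPsym]; ring

/-- telescoping -/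
lemma telescope (v : H) : ∀ k, k ≤ N →
    ‖v‖ ^ 2 - ‖E P k v‖ ^ 2
      = ∑ i ∈ Finset.univ.filter (fun i : Fin N => i.val < k), ‖P i (E P i.val v)‖ ^ 2 := by
  intro k
  induction k with
  | zero => intro _; simp [E]
  | succ k ih =>
    intro hk
    have hkN : k < N := hk
    have hfil : Finset.univ.filter (fun i : Fin N => i.val < k + 1)
        = insert ⟨k, hkN⟩ (Finset.univ.filter (fun i : Fin N => i.val < k)) := by
      ext j
      simp only [Finset.mem_filter, Finset.mem_univ, true_and, Finset.mem_insert]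
      constructor
      · intro hj
        rcases Nat.lt_succ_iff_lt_or_eq.mp hj with h | h
        · exact Or.inr (by simpa using h)
        · exact Or.inl (by ext; simpa using h)
      · rintro (rfl | hj)
        · exact Nat.lt_succ_self k
        · exact Nat.lt_succ_of_lt (by simpa using hj)
    rw [hfil, Finset.sum_insert (by simp)]
    rw [← ih hkN.le, E_succ_apply P hkN, norm_sub_proj hPmem hPid hPsym]
    ring

lemma decomp (v : H) : ∀ k, k ≤ N →
    v - E P k v = ∑ i ∈ Finset.univ.filter (fun i : Fin N => i.val < k), P i (E P i.val v) := by
  intro k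
  induction k with
  | zero => intro _; simp [E]
  | succ k ih =>
    intro hk
    have hkN : k < N := hk
    have hfil : Finset.univ.filter (fun i : Fin N => i.val < k + 1)
        = insert ⟨k, hkN⟩ (Finset.univ.filter (fun i : Fin N => i.val < k)) := by
      ext j
      simp only [Finset.mem_filter, Finset.mem_univ, true_and, Finset.mem_insert]
      constructor
      · intro hj
        rcases Nat.lt_succ_iff_lt_or_eq.mp hj with h | h
        · exact Or.inr (by simpa using h)
        · exact Or.inl (by ext; simpa using h)
      · rintro (rfl | hj)
        · exact Nat.lt_succ_self k
        · exact Nat.lt_succ_of_lt (by simpa using hj)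
    rw [hfil, Finset.sum_insert (by simp), ← ih hkN.le, E_succ_apply P hkN]
    abel

end Facts

end XZaux

namespace XZaux2

open XZaux

variable {H : Type*} [NormedAddCommGroup H] [InnerProductSpace ℝ H]

lemma sum_Iio_swap {M : Type*} [AddCommMonoid M] {n : ℕ} (F : Fin n → Fin n → M) :
    ∑ i, ∑ j ∈ Finset.Iio i, F i j = ∑ j, ∑ i ∈ Finset.Ioi j, F i j := by
  have h1 : ∀ i : Fin n, Finset.Iio i = Finset.univ.filter (fun j => j < i) := by
    intro i; ext j; simp
  have h2 : ∀ j : Fin n, Finset.Ioi j = Finset.univ.filter (fun i => j < i) := by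
    intro j; ext i; simp
  simp_rw [h1, h2, Finset.sum_filter]
  exact Finset.sum_comm

lemma norm_sum_sq {n : ℕ} (w : Fin n → H) :
    ‖∑ i, w i‖ ^ 2
      = ∑ i, ‖w i‖ ^ 2 + 2 * ∑ i, ⟪w i, ∑ j ∈ Finset.Ioi i, w j⟫ := by
  rw [← real_inner_self_eq_norm_sq, sum_inner]
  have h1 : ∀ i : Fin n, ⟪w i, ∑ j, w j⟫
      = (∑ j ∈ Finset.Iio i, ⟪w i, w j⟫) + (‖w i‖ ^ 2 + ∑ j ∈ Finset.Ioi i, ⟪w i, w j⟫) := by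
    intro i
    rw [inner_sum]
    rw [← Finset.sum_filter_add_sum_filter_not Finset.univ (fun j => j < i)]
    congr 1
    · congr 1; ext j; simp
    · have h : Finset.univ.filter (fun j => ¬ j < i) = Finset.Ici i := by
        ext j; simp [not_lt]
      rw [h, Finset.Ici_eq_cons_Ioi, Finset.sum_cons, real_inner_self_eq_norm_sq]
  rw [Finset.sum_congr rfl (fun i _ => h1 i)]
  rw [Finset.sum_add_distrib, Finset.sum_add_distrib]
  have h2 : ∑ i, ∑ j ∈ Finset.Iio i, ⟪w i, w j⟫
      = ∑ i, ⟪w i, ∑ j ∈ Finset.Ioi i, w j⟫ := by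
    rw [sum_Iio_swap (fun i j => ⟪w i, w j⟫)]
    refine Finset.sum_congr rfl fun j _ => ?_
    rw [inner_sum]
    exact Finset.sum_congr rfl fun i _ => real_inner_comm _ _
  rw [h2]
  have h3 : ∑ x : Fin n, ∑ j ∈ Finset.Ioi x, ⟪w x, w j⟫
      = ∑ x : Fin n, ⟪w x, ∑ j ∈ Finset.Ioi x, w j⟫ :=
    Finset.sum_congr rfl fun x _ => (inner_sum _ _ _).symm
  rw [h3]
  ring

section Facts2

variable {N : ℕ} {K : Fin N → Submodule ℝ H} {P : Fin N → H →L[ℝ] H}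
  (hPmem : ∀ i x, P i x ∈ K i)
  (hPid : ∀ i, ∀ x ∈ K i, P i x = x)
  (hPsym : ∀ i x y, ⟪P i x, y⟫ = ⟪x, P i y⟫)

include hPmem hPid hPsym

/-- the key duality identity -/
lemma key (v : H) (w : Fin N → H) (hw : ∀ i, w i ∈ K i) :
    ⟪v, ∑ i, w i⟫
      = ∑ i, ⟪P i (E P i.val v), w i + P i (∑ j ∈ Finset.Ioi i, w j)⟫ := by
  have hfil : ∀ i : Fin N, Finset.univ.filter (fun k : Fin N => k.val < i.val)
      = Finset.Iio i := by
    intro i; ext k; simp only [Finset.mem_filter, Finset.mem_univ, true_and, Finset.mem_Iio, Fin.lt_def]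
  have step1 : ∀ i : Fin N, ⟪v, w i⟫
      = ⟪P i (E P i.val v), w i⟫ + ∑ k ∈ Finset.Iio i, ⟪P k (E P k.val v), P k (w i)⟫ := by
    intro i
    have hv : E P i.val v + (v - E P i.val v) = v := by abel
    calc ⟪v, w i⟫ = ⟪E P i.val v + (v - E P i.val v), w i⟫ := by rw [hv]
      _ = ⟪E P i.val v, w i⟫ + ⟪v - E P i.val v, w i⟫ := inner_add_left _ _ _
      _ = ⟪P i (E P i.val v), w i⟫ + ∑ k ∈ Finset.Iio i, ⟪P k (E P k.val v), P k (w i)⟫ := by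
          congr 1
          · conv_lhs => rw [← hPid i (w i) (hw i)]
            rw [← hPsym]
          · rw [decomp hPmem hPid hPsym v i.val i.isLt.le, hfil i, sum_inner]
            refine Finset.sum_congr rfl fun k _ => ?_
            conv_lhs => rw [← hPP hPmem hPid hPsym k (E P k.val v)]
            rw [hPsym]
  rw [inner_sum, Finset.sum_congr rfl (fun i _ => step1 i)]
  rw [Finset.sum_add_distrib]
  rw [sum_Iio_swap (fun i k => ⟪P k (E P k.val v), P k (w i)⟫)]
  have h3 : ∀ k : Fin N, ∑ i ∈ Finset.Ioi k, ⟪P k (E P k.val v), P k (w i)⟫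
      = ⟪P k (E P k.val v), P k (∑ j ∈ Finset.Ioi k, w j)⟫ := by
    intro k
    rw [map_sum, inner_sum]
  rw [Finset.sum_congr rfl (fun k _ => h3 k), ← Finset.sum_add_distrib]
  exact Finset.sum_congr rfl fun i _ => (inner_add_right _ _ _).symm

/-- pythagoras-type expansion -/
lemma expand (w : Fin N → H) (hw : ∀ i, w i ∈ K i) :
    ∑ i, ‖w i + P i (∑ j ∈ Finset.Ioi i, w j)‖ ^ 2
      = ‖∑ i, w i‖ ^ 2 + ∑ i, ‖P i (∑ j ∈ Finset.Ioi i, w j)‖ ^ 2 := by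
  have h1 : ∀ i : Fin N, ‖w i + P i (∑ j ∈ Finset.Ioi i, w j)‖ ^ 2
      = ‖w i‖ ^ 2 + 2 * ⟪w i, ∑ j ∈ Finset.Ioi i, w j⟫
        + ‖P i (∑ j ∈ Finset.Ioi i, w j)‖ ^ 2 := by
    intro i
    have h : ⟪w i, P i (∑ j ∈ Finset.Ioi i, w j)⟫ = ⟪w i, ∑ j ∈ Finset.Ioi i, w j⟫ := by
      rw [real_inner_comm, hPsym, hPid i (w i) (hw i), real_inner_comm]
    rw [norm_add_sq_real, h]
  rw [Finset.sum_congr rfl (fun i _ => h1 i)]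
  rw [Finset.sum_add_distrib, Finset.sum_add_distrib, ← Finset.mul_sum, norm_sum_sq]

/-- downward recursive solvability -/
lemma solve (z : Fin N → H) (hz : ∀ i, z i ∈ K i) :
    ∃ w : Fin N → H, (∀ i, w i ∈ K i) ∧
      ∀ i : Fin N, w i + P i (∑ j ∈ Finset.Ioi i, w j) = z i := by
  have main : ∀ n : ℕ, ∃ w : Fin N → H, (∀ i, w i ∈ K i) ∧
      ∀ i : Fin N, N ≤ n + i.val → w i + P i (∑ j ∈ Finset.Ioi i, w j) = z i := by
    intro n
    induction n with
    | zero =>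
      refine ⟨0, fun i => (K i).zero_mem, fun i hi => absurd hi ?_⟩
      have := i.isLt; omega
    | succ n ih =>
      obtain ⟨w, hwK, hweq⟩ := ih
      by_cases hn : N ≤ n
      · exact ⟨w, hwK, fun i _ => hweq i (le_trans hn (Nat.le_add_right n i.val))⟩
      · push_neg at hn
        set i₀ : Fin N := ⟨N - n - 1, by omega⟩ with hi₀
        have hv0 : (i₀ : ℕ) = N - n - 1 := rfl
        set w' := Function.update w i₀ (z i₀ - P i₀ (∑ j ∈ Finset.Ioi i₀, w j)) with hw'
        have hIoi : ∀ i : Fin N, i₀ ≤ i →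
            ∑ j ∈ Finset.Ioi i, w' j = ∑ j ∈ Finset.Ioi i, w j := by
          intro i hii
          refine Finset.sum_congr rfl fun j hj => ?_
          have hji : j ≠ i₀ := ne_of_gt (lt_of_le_of_lt hii (Finset.mem_Ioi.mp hj))
          rw [hw', Function.update_of_ne hji]
        refine ⟨w', ?_, ?_⟩
        · intro i
          by_cases h : i = i₀
          · rw [h, hw', Function.update_self]
            exact sub_mem (hz i₀) (hPmem i₀ _)
          · rw [hw', Function.update_of_ne h]; exact hwK i
        · intro i hi
          by_cases h : i = i₀
          · rw [h, hIoi i₀ le_rfl, hw', Function.update_self]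
            abel
          · have hne : (i : ℕ) ≠ N - n - 1 := fun hc => h (Fin.ext (by rw [hc, hv0]))
            have hgt : i₀ < i := by rw [Fin.lt_def, hv0]; omega
            rw [hw', Function.update_of_ne h, hIoi i hgt.le]
            exact hweq i (by omega)
  obtain ⟨w, hwK, hweq⟩ := main N
  exact ⟨w, hwK, fun i => hweq i (Nat.le_add_right N i.val)⟩

end Facts2

end XZaux2


set_option maxHeartbeats 1000000 in
/-- Xu–Zikatanov identity: for closed subspaces `K 1, ..., K N` whose sum is `H`,
with `P i` the orthogonal projection onto `K i`, the squared norm of the error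
propagation operator `(I - P_N) ⋯ (I - P_1)` equals `1 - 1/(1 + c₀)`. -/
theorem xu_zikatanov_identity
    {H : Type*} [NormedAddCommGroup H] [InnerProductSpace ℝ H] [CompleteSpace H]
    (N : ℕ) (K : Fin N → Submodule ℝ H) (hK : ∀ i, IsClosed ((K i : Set H)))
    (hdec : ∀ v : H, ∃ w : Fin N → H, (∀ i, w i ∈ K i) ∧ ∑ i, w i = v)
    (P : Fin N → H →L[ℝ] H)
    (hPmem : ∀ i x, P i x ∈ K i)
    (hPid : ∀ i, ∀ x ∈ K i, P i x = x)
    (hPsym : ∀ i x y, ⟪P i x, y⟫ = ⟪x, P i y⟫)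
    (c0 : ℝ)
    (hc0 : c0 = sSup {t : ℝ | ∃ v : H, ‖v‖ = 1 ∧
      t = sInf {s : ℝ | ∃ w : Fin N → H, (∀ i, w i ∈ K i) ∧ ∑ i, w i = v ∧
        s = ∑ i, ‖P i (∑ j ∈ Finset.Ioi i, w j)‖ ^ 2}})
    (hbdd : BddAbove {t : ℝ | ∃ v : H, ‖v‖ = 1 ∧
      t = sInf {s : ℝ | ∃ w : Fin N → H, (∀ i, w i ∈ K i) ∧ ∑ i, w i = v ∧
        s = ∑ i, ‖P i (∑ j ∈ Finset.Ioi i, w j)‖ ^ 2}}) :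
    ‖(List.ofFn (fun i : Fin N => (1 : H →L[ℝ] H) - P i)).reverse.prod‖ ^ 2
      = 1 - 1 / (1 + c0) := by
  classical
  rw [XZaux.E_prod P]
  set Sv : H → Set ℝ := fun v => {s : ℝ | ∃ w : Fin N → H, (∀ i, w i ∈ K i) ∧ ∑ i, w i = v ∧
        s = ∑ i, ‖P i (∑ j ∈ Finset.Ioi i, w j)‖ ^ 2} with hSv
  set T : Set ℝ := {t : ℝ | ∃ v : H, ‖v‖ = 1 ∧ t = sInf (Sv v)} with hT
  have hTc0 : c0 = sSup T := hc0
  have hTbdd : BddAbove T := hbdd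
  clear hc0 hbdd
  rcases subsingleton_or_nontrivial H with hsub | hnt
  · -- trivial case
    have hE0 : XZaux.E P N = 0 := ContinuousLinearMap.ext fun x => Subsingleton.elim _ _
    have hT0 : T = ∅ := by
      ext t
      simp only [hT, Set.mem_setOf_eq, Set.mem_empty_iff_false, iff_false, not_exists]
      rintro v ⟨hv, -⟩
      have hv0 : v = 0 := Subsingleton.elim v 0
      rw [hv0, norm_zero] at hv
      norm_num at hv
    rw [hTc0, hT0, Real.sSup_empty, hE0]
    norm_num
  · -- main case
    obtain ⟨v₀, hv₀⟩ : ∃ v : H, ‖v‖ = 1 := exists_norm_eq H zero_le_one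
    set Eop : H →L[ℝ] H := XZaux.E P N with hEop
    set D : H → ℝ := fun v => ∑ i, ‖P i (XZaux.E P i.val v)‖ ^ 2 with hD
    have htel : ∀ v : H, ‖v‖ ^ 2 - ‖Eop v‖ ^ 2 = D v := by
      intro v
      have h := XZaux.telescope hPmem hPid hPsym v N le_rfl
      rwa [Finset.filter_true_of_mem (fun i _ => i.isLt)] at h
    have hDnonneg : ∀ v, 0 ≤ D v := fun v => Finset.sum_nonneg fun i _ => sq_nonneg _
    have hSv_nonempty : ∀ v : H, (Sv v).Nonempty := by
      intro v
      obtain ⟨w, hwK, hwsum⟩ := hdec v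
      exact ⟨_, w, hwK, hwsum, rfl⟩
    have hSv_lb : ∀ v : H, ∀ s ∈ Sv v, (0 : ℝ) ≤ s := by
      rintro v s ⟨w, -, -, rfl⟩
      exact Finset.sum_nonneg fun i _ => sq_nonneg _
    have hSv_bdd : ∀ v : H, BddBelow (Sv v) := fun v => ⟨0, fun s hs => hSv_lb v s hs⟩
    -- key inequality : for unit v and any admissible s, 1 ≤ D v * (1 + s)
    have hkey2 : ∀ v : H, ‖v‖ = 1 → ∀ s ∈ Sv v, 1 ≤ D v * (1 + s) := by
      rintro v hv s ⟨w, hwK, hwsum, rfl⟩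
      have h1 : (1 : ℝ) = ⟪v, ∑ i, w i⟫ := by
        rw [hwsum, real_inner_self_eq_norm_sq, hv, one_pow]
      have h2 := XZaux2.key hPmem hPid hPsym v w hwK
      have h3 : (1 : ℝ) ≤ ∑ i, ‖P i (XZaux.E P i.val v)‖
          * ‖w i + P i (∑ j ∈ Finset.Ioi i, w j)‖ := by
        rw [h1, h2]
        exact Finset.sum_le_sum fun i _ => real_inner_le_norm _ _
      have h4 := Finset.sum_mul_sq_le_sq_mul_sq Finset.univ
        (fun i : Fin N => ‖P i (XZaux.E P i.val v)‖)
        (fun i : Fin N => ‖w i + P i (∑ j ∈ Finset.Ioi i, w j)‖)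
      have h5 : (1 : ℝ) ≤ (∑ i, ‖P i (XZaux.E P i.val v)‖
          * ‖w i + P i (∑ j ∈ Finset.Ioi i, w j)‖) ^ 2 := by
        nlinarith
      have h6 := XZaux2.expand hPmem hPid hPsym w hwK
      rw [hwsum, hv, one_pow] at h6
      calc (1 : ℝ) ≤ (∑ i, ‖P i (XZaux.E P i.val v)‖
            * ‖w i + P i (∑ j ∈ Finset.Ioi i, w j)‖) ^ 2 := h5
        _ ≤ (∑ i, ‖P i (XZaux.E P i.val v)‖ ^ 2)
            * ∑ i, ‖w i + P i (∑ j ∈ Finset.Ioi i, w j)‖ ^ 2 := h4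
        _ = D v * (1 + ∑ i, ‖P i (∑ j ∈ Finset.Ioi i, w j)‖ ^ 2) := by rw [h6]
    have hmemT : ∀ v : H, ‖v‖ = 1 → sInf (Sv v) ∈ T := fun v hv => ⟨v, hv, rfl⟩
    have hTne : T.Nonempty := ⟨_, hmemT v₀ hv₀⟩
    have hc0_nonneg : 0 ≤ c0 := by
      rw [hTc0]
      have h1 : 0 ≤ sInf (Sv v₀) := le_csInf (hSv_nonempty v₀) (hSv_lb v₀)
      exact le_trans h1 (le_csSup hTbdd (hmemT v₀ hv₀))
    have h1c0 : (0 : ℝ) < 1 + c0 := by linarith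
    -- lower bound on D
    have hDge : ∀ v : H, ‖v‖ = 1 → 1 / (1 + c0) ≤ D v := by
      intro v hv
      obtain ⟨s₀, hs₀⟩ := hSv_nonempty v
      have hDpos : 0 < D v := by
        rcases lt_or_eq_of_le (hDnonneg v) with h | h
        · exact h
        · exfalso
          have := hkey2 v hv s₀ hs₀
          rw [← h] at this
          norm_num at this
      have hlb : ∀ s ∈ Sv v, 1 / D v - 1 ≤ s := by
        intro s hs
        have := hkey2 v hv s hs
        rw [div_sub' (ne_of_gt hDpos), div_le_iff₀ hDpos]
        nlinarith
      have h1 : 1 / D v - 1 ≤ sInf (Sv v) := le_csInf (hSv_nonempty v) hlb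
      have h2 : sInf (Sv v) ≤ c0 := by
        rw [hTc0]; exact le_csSup hTbdd (hmemT v hv)
      rw [div_le_iff₀ h1c0]
      have h3 : 1 / D v ≤ 1 + c0 := by linarith
      rw [div_le_iff₀ hDpos] at h3
      linarith
    -- upper bound on the operator norm squared
    have hbound : ∀ v : H, ‖Eop v‖ ^ 2 ≤ (1 - 1 / (1 + c0)) * ‖v‖ ^ 2 := by
      intro v
      by_cases hv : v = 0
      · simp [hv]
      · have hnv : (0 : ℝ) < ‖v‖ := norm_pos_iff.mpr hv
        set u : H := ‖v‖⁻¹ • v with hu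
        have hun : ‖u‖ = 1 := by
          rw [hu, norm_smul, norm_inv, norm_norm, inv_mul_cancel₀ (ne_of_gt hnv)]
        have h1 : ‖Eop u‖ ^ 2 ≤ 1 - 1 / (1 + c0) := by
          have h2 := htel u
          have h3 := hDge u hun
          rw [hun] at h2
          nlinarith
        have h4 : Eop u = ‖v‖⁻¹ • Eop v := by rw [hu, map_smul]
        have h5 : ‖Eop u‖ ^ 2 = ‖v‖⁻¹ ^ 2 * ‖Eop v‖ ^ 2 := by
          rw [h4, norm_smul, norm_inv, norm_norm, mul_pow]
        rw [h5] at h1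
        have h6 : ‖v‖⁻¹ ^ 2 * ‖v‖ ^ 2 = 1 := by
          rw [← mul_pow, inv_mul_cancel₀ (ne_of_gt hnv), one_pow]
        calc ‖Eop v‖ ^ 2 = (‖v‖⁻¹ ^ 2 * ‖Eop v‖ ^ 2) * ‖v‖ ^ 2 := by
              field_simp
            _ ≤ (1 - 1 / (1 + c0)) * ‖v‖ ^ 2 := by
              apply mul_le_mul_of_nonneg_right h1 (sq_nonneg _)
    have hκpos : 0 < 1 / (1 + c0) := by positivity
    have hκle1 : 1 / (1 + c0) ≤ 1 := by
      rw [div_le_one h1c0]; linarith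
    have hEnorm : ‖Eop‖ ^ 2 ≤ 1 - 1 / (1 + c0) := by
      have h0 : (0 : ℝ) ≤ 1 - 1 / (1 + c0) := by linarith
      have h1 : ‖Eop‖ ≤ Real.sqrt (1 - 1 / (1 + c0)) := by
        apply ContinuousLinearMap.opNorm_le_bound _ (Real.sqrt_nonneg _)
        intro v
        have h2 := hbound v
        have h3 : ‖Eop v‖ = Real.sqrt (‖Eop v‖ ^ 2) := by
          rw [Real.sqrt_sq (norm_nonneg _)]
        rw [h3]
        calc Real.sqrt (‖Eop v‖ ^ 2) ≤ Real.sqrt ((1 - 1 / (1 + c0)) * ‖v‖ ^ 2) :=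
              Real.sqrt_le_sqrt h2
          _ = Real.sqrt (1 - 1 / (1 + c0)) * ‖v‖ := by
              rw [Real.sqrt_mul h0, Real.sqrt_sq (norm_nonneg _)]
      calc ‖Eop‖ ^ 2 ≤ Real.sqrt (1 - 1 / (1 + c0)) ^ 2 :=
            pow_le_pow_left₀ (norm_nonneg _) h1 2
        _ = 1 - 1 / (1 + c0) := Real.sq_sqrt h0
    -- δ
    set δ : ℝ := 1 - ‖Eop‖ ^ 2 with hδ
    have hδκ : 1 / (1 + c0) ≤ δ := by rw [hδ]; linarith
    have hδpos : 0 < δ := lt_of_lt_of_le hκpos hδκ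
    have hDlow : ∀ u : H, δ * ‖u‖ ^ 2 ≤ D u := by
      intro u
      have h1 : ‖Eop u‖ ≤ ‖Eop‖ * ‖u‖ := Eop.le_opNorm u
      have h2 : ‖Eop u‖ ^ 2 ≤ ‖Eop‖ ^ 2 * ‖u‖ ^ 2 := by
        rw [← mul_pow]
        exact pow_le_pow_left₀ (norm_nonneg _) h1 2
      have h3 := htel u
      nlinarith
    -- the operator S and its surjectivity
    set A : Fin N → H →L[ℝ] H := fun i => (P i).comp (XZaux.E P i.val) with hA
    set S : H →L[ℝ] H :=
      ∑ i, (ContinuousLinearMap.adjoint (A i)).comp (A i) with hS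
    have hSinner : ∀ u u' : H, ⟪S u, u'⟫ = ∑ i, ⟪A i u, A i u'⟫ := by
      intro u u'
      rw [hS, ContinuousLinearMap.sum_apply, sum_inner]
      exact Finset.sum_congr rfl fun i _ => by
        rw [ContinuousLinearMap.comp_apply, ContinuousLinearMap.adjoint_inner_left]
    have hSu : ∀ u : H, ⟪S u, u⟫ = D u := by
      intro u
      rw [hSinner u u, hD]
      exact Finset.sum_congr rfl fun i _ => real_inner_self_eq_norm_sq _
    have hSlow : ∀ u : H, δ * ‖u‖ ≤ ‖S u‖ := by
      intro u
      by_cases hu : u = 0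
      · simp [hu]
      · have hnu : (0 : ℝ) < ‖u‖ := norm_pos_iff.mpr hu
        have h1 : δ * ‖u‖ ^ 2 ≤ ⟪S u, u⟫ := by rw [hSu]; exact hDlow u
        have h2 : ⟪S u, u⟫ ≤ ‖S u‖ * ‖u‖ := real_inner_le_norm _ _
        have h3 : δ * ‖u‖ * ‖u‖ ≤ ‖S u‖ * ‖u‖ := by nlinarith
        exact le_of_mul_le_mul_right h3 hnu
    have hanti : AntilipschitzWith (Real.toNNReal δ⁻¹) S := by
      apply ContinuousLinearMap.antilipschitz_of_bound
      intro x
      have h1 := hSlow x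
      rw [Real.coe_toNNReal _ (le_of_lt (inv_pos.mpr hδpos))]
      rw [inv_mul_eq_div, le_div_iff₀ hδpos]
      linarith
    have hclosed : IsClosed (LinearMap.range (S : H →ₗ[ℝ] H) : Set H) :=
      by rw [LinearMap.coe_range]; exact hanti.isClosed_range S.uniformContinuous
    have hrange : LinearMap.range (S : H →ₗ[ℝ] H) = ⊤ := by
      haveI := hclosed.completeSpace_coe
      rw [← (LinearMap.range (S : H →ₗ[ℝ] H)).orthogonal_orthogonal, Submodule.eq_top_iff']
      intro v'
      rw [Submodule.mem_orthogonal]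
      intro w hw
      have h0 : ⟪S w, w⟫ = 0 := hw (S w) (LinearMap.mem_range.mpr ⟨w, rfl⟩)
      have h1 : δ * ‖w‖ ^ 2 ≤ 0 := by
        have h := hDlow w
        rw [← hSu w, h0] at h
        exact h
      have h2 : w = 0 := by
        have h3 : ‖w‖ ^ 2 ≤ 0 := by nlinarith
        have h4 : ‖w‖ = 0 := by nlinarith [sq_nonneg ‖w‖, norm_nonneg w]
        exact norm_eq_zero.mp h4
      rw [h2]
      exact inner_zero_left _
    -- reverse inequality
    have hrev : c0 ≤ 1 / δ - 1 := by
      rw [hTc0]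
      apply csSup_le hTne
      rintro t ⟨v, hv, rfl⟩
      obtain ⟨u₀, hu₀⟩ : ∃ u, S u = v := LinearMap.range_eq_top.mp hrange v
      obtain ⟨w, hwK, hweq⟩ := XZaux2.solve hPmem hPid hPsym
        (fun i => A i u₀) (fun i => hPmem i _)
      have hsum : ∑ i, w i = v := by
        apply ext_inner_left ℝ
        intro u'
        rw [XZaux2.key hPmem hPid hPsym u' w hwK]
        have h1 : ∀ i : Fin N, ⟪P i (XZaux.E P i.val u'),
            w i + P i (∑ j ∈ Finset.Ioi i, w j)⟫ = ⟪A i u₀, A i u'⟫ := by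
          intro i
          rw [hweq i]
          exact real_inner_comm _ _
        rw [Finset.sum_congr rfl fun i _ => h1 i, ← hSinner u₀ u', hu₀]
        exact real_inner_comm _ _
      set s : ℝ := ∑ i, ‖P i (∑ j ∈ Finset.Ioi i, w j)‖ ^ 2 with hs
      have hsmem : s ∈ Sv v := ⟨w, hwK, hsum, rfl⟩
      have hDu₀ : 1 + s = D u₀ := by
        have h1 := XZaux2.expand hPmem hPid hPsym w hwK
        have h2 : ∑ i, ‖w i + P i (∑ j ∈ Finset.Ioi i, w j)‖ ^ 2 = D u₀ := by
          rw [hD]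
          refine Finset.sum_congr rfl fun i _ => ?_
          rw [hweq i]
          rfl
        rw [h2, hsum, hv, one_pow] at h1
        exact h1.symm
      have hDinner : D u₀ = ⟪v, u₀⟫ := by
        rw [← hSu u₀, hu₀]
      have hub : D u₀ ≤ ‖u₀‖ := by
        rw [hDinner]
        calc ⟪v, u₀⟫ ≤ ‖v‖ * ‖u₀‖ := real_inner_le_norm _ _
          _ = ‖u₀‖ := by rw [hv, one_mul]
      have hu₀norm : ‖u₀‖ ≤ 1 / δ := by
        have h1 := hDlow u₀
        have h2 : δ * ‖u₀‖ ^ 2 ≤ ‖u₀‖ := le_trans h1 hub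
        rw [le_div_iff₀ hδpos]
        nlinarith [norm_nonneg u₀]
      have hsle : s ≤ 1 / δ - 1 := by
        have : 1 + s ≤ 1 / δ := le_trans (le_of_eq hDu₀) (le_trans hub hu₀norm)
        linarith
      exact le_trans (csInf_le (hSv_bdd v) hsmem) hsle
    -- conclude
    have hfin : δ = 1 / (1 + c0) := by
      have h1 : 1 + c0 ≤ 1 / δ := by linarith
      have h2 : δ * (1 + c0) ≤ 1 := by
        rw [← le_div_iff₀' hδpos]
        linarith
      have h3 : δ ≤ 1 / (1 + c0) := by
        rw [le_div_iff₀ h1c0]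
        exact h2
      linarith
    rw [hδ] at hfin
    linarith
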